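/- Let q be a prime power and ℓ ≤ m be positive integers. The minimum over all nonzero F ∈ Mat_{ℓ×m}(F_q) of the number of matrices M ∈ Mat_{ℓ×m}(F_q) with rank(M) = 1 and trace(Fᵀ M) ≠ 0 equals q^{ℓ+m−2}(q − 1); that is, this value is attained by some nonzero F, and every nonzero F gives a count at least q^{ℓ+m−2}(q − 1). In other words, the minimum distance of the determinantal code C(1;ℓ,m) is q^{ℓ+m−2}(q − 1). -/

import Mathlib

open Matrix

section Aux

variable {K : Type*} [Field K] [Fintype K]

private lemma trace_tmul {a b : ℕ} (F : Matrix (Fin a) (Fin b) K)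
    (u : Fin a → K) (v : Fin b → K) :
    Matrix.trace (Fᵀ * vecMulVec u v) = (u ᵥ* F) ⬝ᵥ v := by
  simp only [Matrix.trace, Matrix.diag, Matrix.mul_apply, Matrix.transpose_apply,
    Matrix.vecMulVec_apply, Matrix.vecMul, dotProduct, Finset.sum_mul]
  exact Finset.sum_congr rfl fun j _ => Finset.sum_congr rfl fun i _ => by ring

private lemma rank_zero_iff' {a b : ℕ} (M : Matrix (Fin a) (Fin b) K) :
    M.rank = 0 ↔ M = 0 := by
  constructor
  · intro h
    have h2 : LinearMap.range M.mulVecLin = ⊥ := Submodule.finrank_eq_zero.mp h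
    have h3 : M.mulVecLin = 0 := LinearMap.range_eq_bot.mp h2
    ext i j
    have h4 : M *ᵥ Pi.single j 1 = 0 := by
      rw [← M.mulVecLin_apply, h3]; rfl
    have := congrFun h4 i
    simpa using this
  · rintro rfl; exact Matrix.rank_zero

private lemma rank_vecMulVec_one {a b : ℕ} {u : Fin a → K} {v : Fin b → K}
    (hu : u ≠ 0) (hv : v ≠ 0) : (vecMulVec u v).rank = 1 := by
  have hle : (vecMulVec u v).rank ≤ 1 := by
    rw [vecMulVec_eq Unit]
    exact (Matrix.rank_mul_le_left _ _).trans
      ((Matrix.rank_le_card_width _).trans (by simp))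
  have hne : vecMulVec u v ≠ 0 := by
    obtain ⟨i, hi⟩ := Function.ne_iff.mp hu
    obtain ⟨j, hj⟩ := Function.ne_iff.mp hv
    intro h
    have := congrFun (congrFun h i) j
    simp only [Matrix.vecMulVec_apply, Matrix.zero_apply] at this
    rcases mul_eq_zero.mp this with h' | h'
    · exact hi (by simpa using h')
    · exact hj (by simpa using h')
  have h0 : (vecMulVec u v).rank ≠ 0 := fun h => hne ((rank_zero_iff' _).mp h)
  omega

private lemma exists_decomp {a b : ℕ} {M : Matrix (Fin a) (Fin b) K}
    (h : M.rank = 1) : ∃ u v, u ≠ 0 ∧ v ≠ 0 ∧ M = vecMulVec u v := by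
  have h' : Module.finrank K (LinearMap.range M.mulVecLin) = 1 := h
  obtain ⟨w, hw0, hw⟩ := finrank_eq_one_iff'.mp h'
  have hcol : ∀ j, (Mᵀ j : Fin a → K) ∈ LinearMap.range M.mulVecLin := fun j =>
    ⟨Pi.single j 1, by rw [Matrix.mulVecLin_apply, Matrix.mulVec_single_one]; rfl⟩
  choose c hc using fun j => hw ⟨Mᵀ j, hcol j⟩
  have hc' : ∀ j i, c j * (w : Fin a → K) i = M i j := by
    intro j i
    have := congrArg Subtype.val (hc j)
    exact congrFun this i
  have hMeq : M = vecMulVec (w : Fin a → K) c := by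
    ext i j
    rw [Matrix.vecMulVec_apply, ← hc' j i]; ring
  refine ⟨(w : Fin a → K), c, ?_, ?_, hMeq⟩
  · intro h0
    exact hw0 (Subtype.ext h0)
  · intro h0
    rw [h0] at hMeq
    have : M = 0 := by
      ext i j
      simp [hMeq, Matrix.vecMulVec_apply]
    rw [this] at h
    simpa using h
  
private lemma card_ne_zero_subtype {n : ℕ} {W : Type*} [AddCommGroup W] [Module K W]
    (f : (Fin n → K) →ₗ[K] W) :
    Nat.card {x : Fin n → K // f x ≠ 0} =
      Fintype.card K ^ n -
        Fintype.card K ^ (n - Module.finrank K (LinearMap.range f)) := by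
  classical
  have hker : Nat.card {x : Fin n → K // f x = 0} =
      Fintype.card K ^ (n - Module.finrank K (LinearMap.range f)) := by
    have e : {x : Fin n → K // f x = 0} ≃ LinearMap.ker f :=
      Equiv.subtypeEquivRight fun x => (LinearMap.mem_ker).symm
    rw [Nat.card_congr e, Nat.card_eq_fintype_card,
      Module.card_eq_pow_finrank (K := K)]
    congr 1
    have h1 := LinearMap.finrank_range_add_finrank_ker f
    have h2 : Module.finrank K (Fin n → K) = n := Module.finrank_fin_fun K
    omega
  have hle : Nat.card {x : Fin n → K // f x = 0} ≤ Fintype.card K ^ n := by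
    rw [Nat.card_eq_fintype_card]
    calc Fintype.card {x : Fin n → K // f x = 0}
        ≤ Fintype.card (Fin n → K) := Fintype.card_subtype_le _
      _ = Fintype.card K ^ n := by simp [Fintype.card_fun]
  have hcompl : Nat.card {x : Fin n → K // f x ≠ 0} =
      Fintype.card K ^ n - Nat.card {x : Fin n → K // f x = 0} := by
    rw [Nat.card_eq_fintype_card, Nat.card_eq_fintype_card]
    rw [Fintype.card_subtype_compl]
    congr 1
    simp [Fintype.card_fun]
  omega

private lemma card_dot_ne_zero {b : ℕ} (hb : 0 < b) {w : Fin b → K} (hw : w ≠ 0) :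
    Nat.card {v : Fin b → K // w ⬝ᵥ v ≠ 0} =
      Fintype.card K ^ b - Fintype.card K ^ (b - 1) := by
  classical
  let f : (Fin b → K) →ₗ[K] K :=
    { toFun := fun v => w ⬝ᵥ v
      map_add' := fun x y => by simp [dotProduct_add]
      map_smul' := fun c x => by simp [dotProduct_smul] }
  have hrange : LinearMap.range f = ⊤ := by
    rw [LinearMap.range_eq_top]
    intro y
    obtain ⟨j, hj⟩ := Function.ne_iff.mp hw
    have hj' : w j ≠ 0 := by simpa using hj
    exact ⟨Pi.single j (y / w j), by
      simp [f, dotProduct_single, hj', mul_div_cancel₀]⟩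
  have hfr : Module.finrank K (LinearMap.range f) = 1 := by
    rw [hrange]
    simpa using Module.finrank_self K
  have := card_ne_zero_subtype f
  rw [hfr] at this
  exact this

end Aux

section Count

variable {K : Type*} [Field K] [Fintype K]

private lemma count_formula {a b : ℕ} (hb : 0 < b) (F : Matrix (Fin a) (Fin b) K) :
    Nat.card {M : Matrix (Fin a) (Fin b) K // M.rank = 1 ∧ Matrix.trace (Fᵀ * M) ≠ 0} =
      (Fintype.card K ^ a - Fintype.card K ^ (a - F.rank)) * Fintype.card K ^ (b - 1) := by
  classical
  set q := Fintype.card K with hq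
  have hq2 : 2 ≤ q := Fintype.one_lt_card
  -- the set of pairs
  set S := {p : (Fin a → K) × (Fin b → K) // (p.1 ᵥ* F) ⬝ᵥ p.2 ≠ 0} with hS
  set T := {M : Matrix (Fin a) (Fin b) K // M.rank = 1 ∧ Matrix.trace (Fᵀ * M) ≠ 0} with hT
  -- Step A : card S
  have hA : Nat.card S = (q ^ a - q ^ (a - F.rank)) * (q ^ b - q ^ (b - 1)) := by
    have e1 : S ≃ Σ u : Fin a → K, {v : Fin b → K // (u ᵥ* F) ⬝ᵥ v ≠ 0} :=
      Equiv.subtypeProdEquivSigmaSubtype (α := Fin a → K) (β := Fin b → K) (fun u v => (u ᵥ* F) ⬝ᵥ v ≠ 0)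
    rw [Nat.card_congr e1, Nat.card_eq_fintype_card, Fintype.card_sigma]
    have hterm : ∀ u : Fin a → K,
        Fintype.card {v : Fin b → K // (u ᵥ* F) ⬝ᵥ v ≠ 0} =
          if u ᵥ* F ≠ 0 then q ^ b - q ^ (b - 1) else 0 := by
      intro u
      by_cases h : u ᵥ* F = 0
      · simp only [h, if_neg (not_not_intro rfl)]
        rw [Fintype.card_eq_zero_iff]
        exact ⟨fun v => v.2 (by simp [h])⟩
      · rw [if_pos h, ← Nat.card_eq_fintype_card]
        exact card_dot_ne_zero hb h
    rw [Finset.sum_congr rfl fun u _ => hterm u]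
    rw [Finset.sum_ite, Finset.sum_const_zero, add_zero, Finset.sum_const, smul_eq_mul]
    congr 1
    have : (Finset.univ.filter fun u : Fin a → K => u ᵥ* F ≠ 0).card =
        Fintype.card {u : Fin a → K // u ᵥ* F ≠ 0} := (Fintype.card_subtype _).symm
    rw [this, ← Nat.card_eq_fintype_card]
    have e2 : {u : Fin a → K // u ᵥ* F ≠ 0} ≃ {u : Fin a → K // Fᵀ.mulVecLin u ≠ 0} :=
      Equiv.subtypeEquivRight fun u => by
        rw [Matrix.mulVecLin_apply, Matrix.mulVec_transpose]
    rw [Nat.card_congr e2, card_ne_zero_subtype]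
    have : Module.finrank K (LinearMap.range (Fᵀ).mulVecLin) = F.rank := by
      rw [← Matrix.rank, Matrix.rank_transpose]
    rw [this]
  -- Step B : fibers of the map S → T
  have husens : ∀ (p : (Fin a → K) × (Fin b → K)), (p.1 ᵥ* F) ⬝ᵥ p.2 ≠ 0 →
      (vecMulVec p.1 p.2).rank = 1 ∧ Matrix.trace (Fᵀ * vecMulVec p.1 p.2) ≠ 0 := by
    rintro ⟨u, v⟩ hp
    have hu : u ≠ 0 := by
      rintro rfl; exact hp (by simp)
    have hv : v ≠ 0 := by
      rintro rfl; exact hp (by simp)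
    exact ⟨rank_vecMulVec_one hu hv, by rwa [trace_tmul]⟩
  set g : S → T := fun s => ⟨vecMulVec s.1.1 s.1.2, husens s.1 s.2⟩ with hg
  have hfiber : ∀ t : T, Nat.card {s : S // g s = t} = q - 1 := by
    rintro ⟨M, hM1, hM2⟩
    obtain ⟨u, v, hu, hv, rfl⟩ := exists_decomp hM1
    obtain ⟨i₀, hi₀⟩ := Function.ne_iff.mp hu
    obtain ⟨j₀, hj₀⟩ := Function.ne_iff.mp hv
    have hi₀' : u i₀ ≠ 0 := by simpa using hi₀
    have hj₀' : v j₀ ≠ 0 := by simpa using hj₀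
    have hMne : ∀ c : Kˣ, vecMulVec ((c : K) • u) (((c⁻¹ : Kˣ) : K) • v) = vecMulVec u v := by
      intro c
      ext i j
      have hcc : (c : K) * ((c⁻¹ : Kˣ) : K) = 1 := by
        rw [← Units.val_mul, mul_inv_cancel, Units.val_one]
      simp only [Matrix.vecMulVec_apply, Pi.smul_apply, smul_eq_mul]
      calc (c : K) * u i * (((c⁻¹ : Kˣ) : K) * v j)
          = ((c : K) * ((c⁻¹ : Kˣ) : K)) * (u i * v j) := by ring
        _ = u i * v j := by rw [hcc, one_mul]
    have hdotc : ∀ c : Kˣ, (((c : K) • u) ᵥ* F) ⬝ᵥ (((c⁻¹ : Kˣ) : K) • v) ≠ 0 := by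
      intro c
      rw [← trace_tmul, hMne c]
      exact hM2
    let e : Kˣ → {s : S // g s = (⟨vecMulVec u v, hM1, hM2⟩ : T)} := fun c =>
      ⟨⟨((c : K) • u, ((c⁻¹ : Kˣ) : K) • v), hdotc c⟩, Subtype.ext (hMne c)⟩
    have hbij : Function.Bijective e := by
      constructor
      · intro c c' hcc'
        have h1 : (c : K) • u = (c' : K) • u := by
          have := congrArg (fun s => s.val.val.1) hcc'
          exact this
        have := congrFun h1 i₀
        simp only [Pi.smul_apply, smul_eq_mul] at this
        exact Units.ext (mul_right_cancel₀ hi₀' this)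
      · rintro ⟨⟨⟨u', v'⟩, hdot'⟩, heq⟩
        have heq' : vecMulVec u' v' = vecMulVec u v := congrArg Subtype.val heq
        have hij : ∀ i j, u' i * v' j = u i * v j := fun i j => by
          have := congrFun (congrFun heq' i) j
          simpa [Matrix.vecMulVec_apply] using this
        have h00 : u' i₀ * v' j₀ = u i₀ * v j₀ := hij i₀ j₀
        have hu'i₀ : u' i₀ ≠ 0 := by
          intro h; rw [h, zero_mul] at h00
          exact mul_ne_zero hi₀' hj₀' h00.symm
        have hv'j₀ : v' j₀ ≠ 0 := by
          intro h; rw [h, mul_zero] at h00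
          exact mul_ne_zero hi₀' hj₀' h00.symm
        refine ⟨Units.mk0 (u' i₀ / u i₀) (div_ne_zero hu'i₀ hi₀'), ?_⟩
        apply Subtype.ext
        apply Subtype.ext
        have hufst : (Units.mk0 (u' i₀ / u i₀) (div_ne_zero hu'i₀ hi₀') : K) • u = u' := by
          funext i
          have h1 := hij i j₀
          simp only [Pi.smul_apply, smul_eq_mul, Units.val_mk0]
          field_simp
          apply mul_right_cancel₀ hv'j₀
          linear_combination u i * h00 - u i₀ * h1
        have husnd : (((Units.mk0 (u' i₀ / u i₀) (div_ne_zero hu'i₀ hi₀'))⁻¹ : Kˣ) : K) • v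
            = v' := by
          funext j
          have h1 := hij i₀ j
          simp only [Pi.smul_apply, smul_eq_mul, Units.val_inv_eq_inv_val, Units.val_mk0]
          rw [inv_div]
          field_simp
          linear_combination -h1
        show ((((Units.mk0 (u' i₀ / u i₀) (div_ne_zero hu'i₀ hi₀')) : K) • u,
            (((Units.mk0 (u' i₀ / u i₀) (div_ne_zero hu'i₀ hi₀'))⁻¹ : Kˣ) : K) • v) :
            (Fin a → K) × (Fin b → K)) = (u', v')
        rw [hufst, husnd]
    have : Nat.card Kˣ = Nat.card {s : S // g s = (⟨vecMulVec u v, hM1, hM2⟩ : T)} :=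
      Nat.card_eq_of_bijective e hbij
    rw [← this, Nat.card_units, Nat.card_eq_fintype_card]
  -- assemble
  have hsum : Nat.card S = Nat.card T * (q - 1) := by
    have e3 : (Σ t : T, {s : S // g s = t}) ≃ S := Equiv.sigmaFiberEquiv g
    rw [← Nat.card_congr e3, Nat.card_eq_fintype_card, Fintype.card_sigma]
    have : ∀ t : T, Fintype.card {s : S // g s = t} = q - 1 := fun t => by
      rw [← Nat.card_eq_fintype_card]; exact hfiber t
    rw [Finset.sum_congr rfl fun t _ => this t, Finset.sum_const, smul_eq_mul,
      Nat.card_eq_fintype_card, Finset.card_univ]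
  have hq1 : 0 < q - 1 := by omega
  have hpow : q ^ b - q ^ (b - 1) = q ^ (b - 1) * (q - 1) := by
    have hb' : q ^ b = q ^ (b - 1) * q := by
      rw [← pow_succ]
      congr 1
      omega
    rw [hb', Nat.mul_sub, mul_one]
  apply Nat.eq_of_mul_eq_mul_right hq1
  rw [← hsum, hA, hpow]
  ring

end Count

/-- The minimum distance of the determinantal code `C(1; ℓ, m)` is `q ^ (ℓ + m - 2) * (q - 1)`:
this value is the least element of the set of weights of nonzero codewords, i.e. of the set of
counts of rank-one matrices `M` with `trace (Fᵀ * M) ≠ 0`, over nonzero `F`. -/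
theorem det_code_min_distance_t_one (K : Type*) [Field K] [Fintype K] (q ℓ m : ℕ)
    (hq : Fintype.card K = q) (hℓ : 0 < ℓ) (hℓm : ℓ ≤ m) :
    IsLeast {w : ℕ | ∃ F : Matrix (Fin ℓ) (Fin m) K, F ≠ 0 ∧
        w = Nat.card {M : Matrix (Fin ℓ) (Fin m) K // M.rank = 1 ∧ Matrix.trace (Fᵀ * M) ≠ 0}}
      (q ^ (ℓ + m - 2) * (q - 1)) := by
  subst hq
  set q := Fintype.card K with hqdef
  have hq2 : 2 ≤ q := Fintype.one_lt_card
  have hm : 0 < m := lt_of_lt_of_le hℓ hℓm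
  have harith : (q ^ ℓ - q ^ (ℓ - 1)) * q ^ (m - 1) = q ^ (ℓ + m - 2) * (q - 1) := by
    rw [Nat.sub_mul, Nat.mul_sub, mul_one]
    congr 1
    · rw [← pow_add, ← pow_succ]
      congr 1
      omega
    · rw [← pow_add]
      congr 1
      omega
  constructor
  · -- membership : take F = vecMulVec e_0 e_0
    set i₀ : Fin ℓ := ⟨0, hℓ⟩
    set j₀ : Fin m := ⟨0, hm⟩
    have hone : (1 : K) ≠ 0 := one_ne_zero
    have hsing1 : (Pi.single i₀ (1 : K) : Fin ℓ → K) ≠ 0 := by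
      intro h
      have := congrFun h i₀
      simp at this
    have hsing2 : (Pi.single j₀ (1 : K) : Fin m → K) ≠ 0 := by
      intro h
      have := congrFun h j₀
      simp at this
    set F₀ : Matrix (Fin ℓ) (Fin m) K := vecMulVec (Pi.single i₀ (1 : K)) (Pi.single j₀ (1 : K)) with hF₀
    have hrank : F₀.rank = 1 := rank_vecMulVec_one hsing1 hsing2
    have hFne : F₀ ≠ 0 := fun h => by
      rw [h] at hrank
      simpa using hrank
    refine ⟨F₀, hFne, ?_⟩
    rw [count_formula hm F₀, hrank, harith]
  · -- lower bound
    rintro w ⟨F, hF, rfl⟩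
    rw [count_formula hm F]
    rw [← harith]
    apply Nat.mul_le_mul_right
    apply Nat.sub_le_sub_left
    apply Nat.pow_le_pow_right (by omega)
    have hr : F.rank ≠ 0 := fun h => hF ((rank_zero_iff' F).mp h)
    omega
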